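/- Let P and R be probability measures on a measurable space Ω with H(P|R) < ∞. Then the function f : [0, 1] → [0, ∞) defined by f(x) := H(x·P + (1−x)·R | R) is finite at every x ∈ [0, 1], convex, continuous on [0, 1], and nondecreasing. -/

import Mathlib

open MeasureTheory Real Filter Classical
open scoped ENNReal

/-- Relative entropy `H(P|Q) ∈ [0,∞]`: the integral `∫ log(dP/dQ) dP` if `P ≪ Q`
(with value `+∞` when `log(dP/dQ)` is not `P`-integrable), and `+∞` otherwise. -/
noncomputable def relEntropy {Ω : Type*} [MeasurableSpace Ω] (P Q : Measure Ω) : EReal :=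
  if P ≪ Q ∧ Integrable (llr P Q) P then ((∫ ω, llr P Q ω ∂P : ℝ) : EReal) else ⊤

/-- Auxiliary: `t - 1 ≤ t * log t` for `t ≥ 0`. -/
lemma aux_sub_one_le_mul_log {t : ℝ} (ht : 0 ≤ t) : t - 1 ≤ t * Real.log t := by
  rcases eq_or_lt_of_le ht with h | h
  · simp [← h]
  · have h1 := Real.log_le_sub_one_of_pos (inv_pos.2 h)
    rw [Real.log_inv] at h1
    have h2 : t * (-Real.log t) ≤ t * (t⁻¹ - 1) := mul_le_mul_of_nonneg_left h1 ht
    rw [mul_sub, mul_inv_cancel₀ (ne_of_gt h), mul_neg] at h2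
    linarith

/-- For probability measures `P, R` with `H(P|R) < ∞`, the function
`f(x) := H(x·P + (1−x)·R | R)` is finite at every `x ∈ [0,1]`, convex, continuous
on `[0,1]`, and nondecreasing. -/
theorem relEntropy_convexCombination_convex_continuous_monotone {Ω : Type*}
    [MeasurableSpace Ω] (P R : Measure Ω)
    [IsProbabilityMeasure P] [IsProbabilityMeasure R] (hH : relEntropy P R < ⊤) :
    (∀ x ∈ Set.Icc (0 : ℝ) 1,
      relEntropy (ENNReal.ofReal x • P + ENNReal.ofReal (1 - x) • R) R ≠ ⊤) ∧
    ConvexOn ℝ (Set.Icc (0 : ℝ) 1) (fun x : ℝ =>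
      (relEntropy (ENNReal.ofReal x • P + ENNReal.ofReal (1 - x) • R) R).toReal) ∧
    ContinuousOn (fun x : ℝ =>
      (relEntropy (ENNReal.ofReal x • P + ENNReal.ofReal (1 - x) • R) R).toReal)
      (Set.Icc (0 : ℝ) 1) ∧
    MonotoneOn (fun x : ℝ =>
      (relEntropy (ENNReal.ofReal x • P + ENNReal.ofReal (1 - x) • R) R).toReal)
      (Set.Icc (0 : ℝ) 1) := by
  classical
  -- extract absolute continuity and integrability from `hH`
  rw [relEntropy] at hH
  by_cases h : P ≪ R ∧ Integrable (llr P R) P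
  swap
  · rw [if_neg h] at hH; exact absurd hH (lt_irrefl _)
  obtain ⟨hac, hint⟩ := h
  -- the real-valued density
  set g : Ω → ℝ := fun ω => (P.rnDeriv R ω).toReal with hg_def
  have hg_meas : Measurable g := (Measure.measurable_rnDeriv P R).ennreal_toReal
  have hg_nonneg : ∀ ω, 0 ≤ g ω := fun ω => ENNReal.toReal_nonneg
  have hg_int : Integrable g R := Measure.integrable_toReal_rnDeriv
  have hg_int1 : ∫ ω, g ω ∂ R = 1 := by
    rw [hg_def, Measure.integral_toReal_rnDeriv hac]
    simp
  -- integrability of `g log g`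
  have hgg : Integrable (fun ω => g ω * Real.log (g ω)) R := by
    have := (integrable_rnDeriv_smul_iff hac).mpr hint
    simpa [llr, hg_def, smul_eq_mul] using this
  -- the family of integrands
  set F : ℝ → Ω → ℝ := fun x ω => (x * g ω + (1 - x)) * Real.log (x * g ω + (1 - x))
    with hF_def
  have hF_meas : ∀ x : ℝ, AEStronglyMeasurable (F x) R := by
    intro x
    exact (Real.continuous_mul_log.measurable.comp
      ((hg_meas.const_mul x).add_const (1 - x))).aestronglyMeasurable
  have hval_nonneg : ∀ x ∈ Set.Icc (0 : ℝ) 1, ∀ ω, 0 ≤ x * g ω + (1 - x) := by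
    intro x hx ω
    have := mul_nonneg hx.1 (hg_nonneg ω)
    have := hx.2
    nlinarith
  -- uniform bound
  have hF_bound : ∀ x ∈ Set.Icc (0 : ℝ) 1, ∀ ω,
      |F x ω| ≤ |g ω * Real.log (g ω)| + 1 := by
    intro x hx ω
    have ht : 0 ≤ x * g ω + (1 - x) := hval_nonneg x hx ω
    rw [abs_le]
    constructor
    · have := aux_sub_one_le_mul_log ht
      have habs : 0 ≤ |g ω * Real.log (g ω)| := abs_nonneg _
      simp only [hF_def]
      nlinarith
    · -- convexity upper bound
      have hu : g ω ∈ Set.Ici (0 : ℝ) := hg_nonneg ω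
      have hv : (1 : ℝ) ∈ Set.Ici (0 : ℝ) := by norm_num
      have hcx := Real.convexOn_mul_log.2 hu hv hx.1 (by linarith [hx.2] : (0:ℝ) ≤ 1 - x)
        (by ring)
      simp only [smul_eq_mul, mul_one, Real.log_one, mul_zero, add_zero] at hcx
      have h1 : x * (g ω * Real.log (g ω)) ≤ |g ω * Real.log (g ω)| := by
        calc x * (g ω * Real.log (g ω)) ≤ x * |g ω * Real.log (g ω)| :=
              mul_le_mul_of_nonneg_left (le_abs_self _) hx.1
          _ ≤ 1 * |g ω * Real.log (g ω)| :=
              mul_le_mul_of_nonneg_right hx.2 (abs_nonneg _)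
          _ = _ := one_mul _
      simp only [hF_def]
      calc (x * g ω + (1 - x)) * Real.log (x * g ω + (1 - x))
          ≤ x * (g ω * Real.log (g ω)) := hcx
        _ ≤ |g ω * Real.log (g ω)| := h1
        _ ≤ |g ω * Real.log (g ω)| + 1 := by linarith
  have hbound_int : Integrable (fun ω => |g ω * Real.log (g ω)| + 1) R :=
    hgg.abs.add (integrable_const 1)
  have hF_int : ∀ x ∈ Set.Icc (0 : ℝ) 1, Integrable (F x) R := by
    intro x hx
    exact hbound_int.mono' (hF_meas x)
      (Filter.Eventually.of_forall fun ω => by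
        rw [Real.norm_eq_abs]; exact hF_bound x hx ω)
  -- the key identity
  have hkey : ∀ x ∈ Set.Icc (0 : ℝ) 1,
      relEntropy (ENNReal.ofReal x • P + ENNReal.ofReal (1 - x) • R) R
        = ((∫ ω, F x ω ∂ R : ℝ) : EReal) := by
    intro x hx
    set μx : Measure Ω := ENNReal.ofReal x • P + ENNReal.ofReal (1 - x) • R with hμx_def
    set d : Ω → ℝ≥0∞ := fun ω => ENNReal.ofReal x * P.rnDeriv R ω + ENNReal.ofReal (1 - x)
      with hd_def
    have hd_meas : Measurable d :=
      ((Measure.measurable_rnDeriv P R).const_mul _).add measurable_const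
    have h1 : R.withDensity (fun ω => ENNReal.ofReal x * P.rnDeriv R ω)
        = ENNReal.ofReal x • P := by
      rw [show (fun ω => ENNReal.ofReal x * P.rnDeriv R ω)
            = ENNReal.ofReal x • P.rnDeriv R from rfl,
        withDensity_smul _ (Measure.measurable_rnDeriv P R),
        Measure.withDensity_rnDeriv_eq P R hac]
    have h2 : R.withDensity (fun _ => ENNReal.ofReal (1 - x)) = ENNReal.ofReal (1 - x) • R :=
      withDensity_const _
    have hμx_eq : μx = R.withDensity d := by
      rw [hμx_def, ← h1, ← h2]
      exact (withDensity_add_right _ measurable_const).symm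
    have hμx_prob : IsProbabilityMeasure μx := by
      constructor
      rw [hμx_def]
      simp only [Measure.coe_add, Measure.coe_smul, Pi.add_apply, Pi.smul_apply,
        smul_eq_mul, measure_univ, mul_one]
      rw [← ENNReal.ofReal_add hx.1 (by linarith [hx.2])]
      norm_num
    have hac' : μx ≪ R := by rw [hμx_eq]; exact withDensity_absolutelyContinuous R d
    have hrn : μx.rnDeriv R =ᵐ[R] d := by
      rw [hμx_eq]; exact Measure.rnDeriv_withDensity R hd_meas
    have htoReal : ∀ᵐ ω ∂ R, (d ω).toReal = x * g ω + (1 - x) := by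
      filter_upwards [Measure.rnDeriv_lt_top P R] with ω hω
      rw [hd_def]
      rw [ENNReal.toReal_add (by finiteness) (by finiteness), ENNReal.toReal_mul,
        ENNReal.toReal_ofReal hx.1, ENNReal.toReal_ofReal (by linarith [hx.2])]
    have hllr : (fun ω => (μx.rnDeriv R ω).toReal • llr μx R ω) =ᵐ[R] F x := by
      filter_upwards [hrn, htoReal] with ω h1' h2'
      simp only [llr, smul_eq_mul, h1', h2', hF_def]
    have hint' : Integrable (llr μx R) μx := by
      rw [← integrable_rnDeriv_smul_iff hac']
      exact (hF_int x hx).congr hllr.symm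
    rw [relEntropy, if_pos ⟨hac', hint'⟩]
    congr 1
    rw [← integral_rnDeriv_smul hac']
    exact integral_congr_ae hllr
  -- basic facts about f
  set f : ℝ → ℝ := fun x =>
    (relEntropy (ENNReal.ofReal x • P + ENNReal.ofReal (1 - x) • R) R).toReal with hf_def
  have hf_eq : ∀ x ∈ Set.Icc (0 : ℝ) 1, f x = ∫ ω, F x ω ∂ R := by
    intro x hx
    rw [hf_def]
    simp only
    rw [hkey x hx, EReal.toReal_coe]
  -- nonnegativity
  have hf_nonneg : ∀ x ∈ Set.Icc (0 : ℝ) 1, 0 ≤ f x := by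
    intro x hx
    rw [hf_eq x hx]
    have hlow_int : Integrable (fun ω => x * g ω - x) R :=
      (hg_int.const_mul x).sub (integrable_const x)
    have hle : (fun ω => x * g ω - x) ≤ F x := by
      intro ω
      have := aux_sub_one_le_mul_log (hval_nonneg x hx ω)
      simp only [hF_def]
      linarith
    have : ∫ ω, (x * g ω - x) ∂ R ≤ ∫ ω, F x ω ∂ R :=
      integral_mono hlow_int (hF_int x hx) hle
    have hzero : ∫ ω, (x * g ω - x) ∂ R = 0 := by
      rw [integral_sub (hg_int.const_mul x) (integrable_const x),
        integral_const_mul, hg_int1, integral_const]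
      simp
    linarith
  -- f 0 = 0
  have hf_zero : f 0 = 0 := by
    rw [hf_eq 0 (by norm_num)]
    simp [hF_def]
  -- convexity
  have hconv : ConvexOn ℝ (Set.Icc (0 : ℝ) 1) f := by
    refine ⟨convex_Icc 0 1, fun a ha b hb s t hs ht hst => ?_⟩
    have hmem : s • a + t • b ∈ Set.Icc (0 : ℝ) 1 := (convex_Icc 0 1) ha hb hs ht hst
    simp only [smul_eq_mul] at hmem ⊢
    have key : ∀ ω, F (s * a + t * b) ω ≤ s * F a ω + t * F b ω := by
      intro ω
      have hu : (a * g ω + (1 - a)) ∈ Set.Ici (0 : ℝ) := hval_nonneg a ha ω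
      have hv : (b * g ω + (1 - b)) ∈ Set.Ici (0 : ℝ) := hval_nonneg b hb ω
      have hcx := Real.convexOn_mul_log.2 hu hv hs ht hst
      simp only [smul_eq_mul] at hcx
      have harg : s * (a * g ω + (1 - a)) + t * (b * g ω + (1 - b))
          = (s * a + t * b) * g ω + (1 - (s * a + t * b)) := by
        have hts : t = 1 - s := by linarith
        subst hts; ring
      rw [harg] at hcx
      simpa only [hF_def] using hcx
    calc f (s * a + t * b) = ∫ ω, F (s * a + t * b) ω ∂ R := hf_eq _ hmem
      _ ≤ ∫ ω, (s * F a ω + t * F b ω) ∂ R :=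
          integral_mono (hF_int _ hmem)
            (((hF_int a ha).const_mul s).add ((hF_int b hb).const_mul t)) key
      _ = s * ∫ ω, F a ω ∂ R + t * ∫ ω, F b ω ∂ R := by
          rw [integral_add ((hF_int a ha).const_mul s) ((hF_int b hb).const_mul t),
            integral_const_mul, integral_const_mul]
      _ = s * f a + t * f b := by rw [hf_eq a ha, hf_eq b hb]
  -- continuity
  have hcont : ContinuousOn f (Set.Icc (0 : ℝ) 1) := by
    have hcont' : ContinuousOn (fun x => ∫ ω, F x ω ∂ R) (Set.Icc (0 : ℝ) 1) := by
      refine continuousOn_of_dominated (fun x hx => hF_meas x)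
        (fun x hx => Filter.Eventually.of_forall fun ω => by
          rw [Real.norm_eq_abs]; exact hF_bound x hx ω)
        hbound_int ?_
      refine Filter.Eventually.of_forall fun ω => ?_
      have : Continuous fun x : ℝ => F x ω := by
        simp only [hF_def]
        exact Real.continuous_mul_log.comp
          ((continuous_id.mul continuous_const).add (continuous_const.sub continuous_id))
      exact this.continuousOn
    exact hcont'.congr hf_eq
  -- monotonicity
  have hmono : MonotoneOn f (Set.Icc (0 : ℝ) 1) := by
    intro x hx y hy hxy
    rcases eq_or_lt_of_le hy.1 with hy0 | hy0
    · have hx0 : x = 0 := le_antisymm (hy0 ▸ hxy) hx.1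
      rw [hx0, ← hy0]
    · have hs : 0 ≤ x / y := div_nonneg hx.1 (le_of_lt hy0)
      have ht : 0 ≤ 1 - x / y := by
        have : x / y ≤ 1 := div_le_one_of_le₀ hxy (le_of_lt hy0)
        linarith
      have h0mem : (0 : ℝ) ∈ Set.Icc (0 : ℝ) 1 := by norm_num
      have hcx := hconv.2 hy h0mem hs ht (by ring)
      simp only [smul_eq_mul, mul_zero, add_zero] at hcx
      rw [div_mul_cancel₀ x (ne_of_gt hy0), hf_zero, mul_zero, add_zero] at hcx
      calc f x ≤ x / y * f y := hcx
        _ ≤ 1 * f y := mul_le_mul_of_nonneg_right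
            (div_le_one_of_le₀ hxy (le_of_lt hy0)) (hf_nonneg y hy)
        _ = f y := one_mul _
  refine ⟨fun x hx => ?_, hconv, hcont, hmono⟩
  rw [hkey x hx]
  exact EReal.coe_ne_top _
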